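/- Let X, Y be complex Hilbert spaces and Yₙ a finite-dimensional complex inner product space, T : X → Y and Tₙ : X → Yₙ bounded linear operators, and x† ∈ X. Suppose: (i) x† = φ(T*T)u for some u ∈ X, where φ : [0,∞) → ℝ is continuous with φ(0) = 0 and φ(λ) > 0 for λ > 0, and α·φ(λ)/(λ+α) ≤ c₀·φ(α) for all α, λ > 0 with a constant c₀ > 0; (ii) ε > 0 satisfies ‖T*T − Tₙ*Tₙ‖ ≤ ε; (iii) ỹₙ ∈ Yₙ satisfies ‖Tₙ x† − ỹₙ‖ ≤ √ε·φ(ε). Let x̃ be the unique solution of (Tₙ*Tₙ + εI)x̃ = Tₙ* ỹₙ. Then ‖x† − x̃‖ ≤ (2c₀‖u‖ + 1)·φ(ε). -/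

import Mathlib

open ContinuousLinearMap

section AuxRegDisc

variable {X : Type*} [NormedAddCommGroup X] [InnerProductSpace ℂ X] [CompleteSpace X]

lemma aux_shift_eq_cfc {B : X →L[ℂ] X} (hB : 0 ≤ B) (ε : ℝ) :
    B + ε • 1 = cfc (fun l : ℝ => l + ε) B := by
  have hBsa : IsSelfAdjoint B := ((nonneg_iff_isPositive B).mp hB).isSelfAdjoint
  rw [cfc_add B (fun x : ℝ => x) (fun _ => ε) continuousOn_id continuousOn_const,
    cfc_id' (R := ℝ) (a := B) hBsa, cfc_const ε B hBsa, Algebra.algebraMap_eq_smul_one]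

lemma aux_resolvent_mul {B : X →L[ℂ] X} (hB : 0 ≤ B) (ε : ℝ) (hε : 0 < ε) :
    cfc (fun l : ℝ => (l + ε)⁻¹) B * (B + ε • 1) = 1 := by
  have hBsa : IsSelfAdjoint B := ((nonneg_iff_isPositive B).mp hB).isSelfAdjoint
  have hne : ∀ x ∈ spectrum ℝ B, x + ε ≠ 0 := fun x hx => by
    have := spectrum_nonneg_of_nonneg hB hx; positivity
  have hg : ContinuousOn (fun l : ℝ => (l + ε)⁻¹) (spectrum ℝ B) :=
    (continuousOn_id.add continuousOn_const).inv₀ hne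
  rw [aux_shift_eq_cfc hB ε,
    ← cfc_mul (fun l : ℝ => (l + ε)⁻¹) (fun l : ℝ => l + ε) B hg
      (continuousOn_id.add continuousOn_const)]
  have h2 : cfc (fun l : ℝ => (l + ε)⁻¹ * (l + ε)) B = cfc (1 : ℝ → ℝ) B :=
    cfc_congr fun x hx => by
      simp only [Pi.one_apply]
      exact inv_mul_cancel₀ (hne x hx)
  rw [h2, cfc_one ℝ B hBsa]

lemma aux_mul_resolvent {B : X →L[ℂ] X} (hB : 0 ≤ B) (ε : ℝ) (hε : 0 < ε) :
    (B + ε • 1) * cfc (fun l : ℝ => (l + ε)⁻¹) B = 1 := by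
  have hBsa : IsSelfAdjoint B := ((nonneg_iff_isPositive B).mp hB).isSelfAdjoint
  have hne : ∀ x ∈ spectrum ℝ B, x + ε ≠ 0 := fun x hx => by
    have := spectrum_nonneg_of_nonneg hB hx; positivity
  have hg : ContinuousOn (fun l : ℝ => (l + ε)⁻¹) (spectrum ℝ B) :=
    (continuousOn_id.add continuousOn_const).inv₀ hne
  rw [aux_shift_eq_cfc hB ε,
    ← cfc_mul (fun l : ℝ => l + ε) (fun l : ℝ => (l + ε)⁻¹) B
      (continuousOn_id.add continuousOn_const) hg]
  have h2 : cfc (fun l : ℝ => (l + ε) * (l + ε)⁻¹) B = cfc (1 : ℝ → ℝ) B :=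
    cfc_congr fun x hx => by
      simp only [Pi.one_apply]
      exact mul_inv_cancel₀ (hne x hx)
  rw [h2, cfc_one ℝ B hBsa]

end AuxRegDisc

set_option maxHeartbeats 1000000 in
theorem regularized_discretization_rate_under_source_condition
    {X Y Yn : Type*} [NormedAddCommGroup X] [InnerProductSpace ℂ X] [CompleteSpace X]
    [NormedAddCommGroup Y] [InnerProductSpace ℂ Y] [CompleteSpace Y]
    [NormedAddCommGroup Yn] [InnerProductSpace ℂ Yn] [FiniteDimensional ℂ Yn]
    (T : X →L[ℂ] Y) (Tn : X →L[ℂ] Yn) (xdag : X)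
    (φ : ℝ → ℝ) (hφcont : ContinuousOn φ (Set.Ici 0)) (hφ0 : φ 0 = 0)
    (hφpos : ∀ l > (0 : ℝ), 0 < φ l)
    (c₀ : ℝ) (hc₀ : 0 < c₀)
    (hsrc : ∀ α > (0 : ℝ), ∀ l > (0 : ℝ), α * φ l / (l + α) ≤ c₀ * φ α)
    (u : X) (hu : xdag = cfc φ (adjoint T ∘L T) u)
    (ε : ℝ) (hε : 0 < ε)
    (hnorm : ‖(adjoint T ∘L T) - (adjoint Tn ∘L Tn)‖ ≤ ε)
    (ytil : Yn) (hytil : ‖Tn xdag - ytil‖ ≤ Real.sqrt ε * φ ε)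
    (xtil : X)
    (hxtil : (adjoint Tn ∘L Tn) xtil + ε • xtil = adjoint Tn ytil) :
    ‖xdag - xtil‖ ≤ (2 * c₀ * ‖u‖ + 1) * φ ε := by
  set A : X →L[ℂ] X := adjoint T ∘L T with hAdef
  set B : X →L[ℂ] X := adjoint Tn ∘L Tn with hBdef
  have hApos : 0 ≤ A := (nonneg_iff_isPositive A).mpr (by simpa [one_def] using isPositive_one.adjoint_conj T)
  have hBpos : 0 ≤ B := (nonneg_iff_isPositive B).mpr
    (by simpa [one_def] using isPositive_one.adjoint_conj Tn)
  have hAsa : IsSelfAdjoint A := ((nonneg_iff_isPositive A).mp hApos).isSelfAdjoint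
  have hBsa : IsSelfAdjoint B := ((nonneg_iff_isPositive B).mp hBpos).isSelfAdjoint
  have hspecA : ∀ x ∈ spectrum ℝ A, 0 ≤ x := fun x hx => spectrum_nonneg_of_nonneg hApos hx
  have hspecB : ∀ x ∈ spectrum ℝ B, 0 ≤ x := fun x hx => spectrum_nonneg_of_nonneg hBpos hx
  have hneA : ∀ x ∈ spectrum ℝ A, x + ε ≠ 0 := fun x hx => by
    have := hspecA x hx; positivity
  have hneB : ∀ x ∈ spectrum ℝ B, x + ε ≠ 0 := fun x hx => by
    have := hspecB x hx; positivity
  have hgA : ContinuousOn (fun l : ℝ => (l + ε)⁻¹) (spectrum ℝ A) :=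
    (continuousOn_id.add continuousOn_const).inv₀ hneA
  have hgB : ContinuousOn (fun l : ℝ => (l + ε)⁻¹) (spectrum ℝ B) :=
    (continuousOn_id.add continuousOn_const).inv₀ hneB
  have hφA : ContinuousOn φ (spectrum ℝ A) := hφcont.mono (fun x hx => hspecA x hx)
  set R : X →L[ℂ] X := cfc (fun l : ℝ => (l + ε)⁻¹) B with hRdef
  set RA : X →L[ℂ] X := cfc (fun l : ℝ => (l + ε)⁻¹) A with hRAdef
  set P : X →L[ℂ] X := cfc φ A with hPdef
  have hRB : R * (B + ε • 1) = 1 := aux_resolvent_mul hBpos ε hε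
  have hRAA : RA * (A + ε • 1) = 1 := aux_resolvent_mul hApos ε hε
  have hAAR : (A + ε • 1) * RA = 1 := aux_mul_resolvent hApos ε hε
  have hRsa : IsSelfAdjoint R := cfc_predicate _ B
  have hφε : 0 < φ ε := hφpos ε hε
  have hRv : ∀ v : X, R ((B + ε • 1) v) = v := by
    intro v
    have := congrArg (fun (S : X →L[ℂ] X) => S v) hRB
    simpa [mul_apply] using this
  have key : xdag - xtil = R (adjoint Tn (Tn xdag - ytil)) + ε • (R xdag) := by
    have h2 : (B + ε • 1) xtil = adjoint Tn ytil := by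
      simpa [add_apply, smul_apply, one_apply] using hxtil
    have h1 : xdag - xtil = R ((B + ε • 1) xdag - adjoint Tn ytil) := by
      rw [← h2, map_sub, hRv, hRv]
    rw [h1]
    have h3 : (B + ε • 1) xdag - adjoint Tn ytil
        = adjoint Tn (Tn xdag - ytil) + ε • xdag := by
      simp only [add_apply, smul_apply, one_apply_eq_self, map_sub, hBdef, comp_apply]
      abel
    rw [h3, map_add, R.map_smul_of_tower]
  -- bound on ‖R ∘L adjoint Tn‖ via S = Tn ∘L R
  set S : X →L[ℂ] Yn := Tn ∘L R with hSdef
  have hadjS : adjoint S = R ∘L adjoint Tn := by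
    rw [hSdef, adjoint_comp, ← star_eq_adjoint R, hRsa.star_eq]
  have hnormS : ‖S‖ ≤ 1 / (2 * Real.sqrt ε) := by
    have hsq : ‖adjoint S ∘L S‖ = ‖S‖ * ‖S‖ := norm_adjoint_comp_self S
    have hcomp : adjoint S ∘L S = cfc (fun l : ℝ => (l + ε)⁻¹ * (l * (l + ε)⁻¹)) B := by
      have h4 : cfc (fun l : ℝ => (l + ε)⁻¹ * (l * (l + ε)⁻¹)) B = R * (B * R) := by
        rw [cfc_mul (fun l : ℝ => (l + ε)⁻¹) (fun l : ℝ => l * (l + ε)⁻¹) B hgB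
            (continuousOn_id.mul hgB),
          cfc_mul (fun l : ℝ => l) (fun l : ℝ => (l + ε)⁻¹) B continuousOn_id hgB,
          cfc_id' (R := ℝ) (a := B) hBsa]
      rw [h4, hadjS, hSdef]
      rfl
    have hbound : ‖adjoint S ∘L S‖ ≤ 1 / (4 * ε) := by
      rw [hcomp]
      apply norm_cfc_le (by positivity)
      intro x hx
      have hx0 : 0 ≤ x := hspecB x hx
      have hxε : 0 < x + ε := by positivity
      rw [Real.norm_of_nonneg (by positivity),
        show (x + ε)⁻¹ * (x * (x + ε)⁻¹) = x / (x + ε) ^ 2 by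
          rw [div_eq_mul_inv, sq, mul_inv]; ring]
      rw [div_le_div_iff₀ (by positivity) (by positivity)]
      nlinarith [sq_nonneg (x - ε)]
    have hSS : ‖S‖ * ‖S‖ ≤ 1 / (4 * ε) := hsq ▸ hbound
    have hsqrt : (1 : ℝ) / (2 * Real.sqrt ε) = Real.sqrt (1 / (4 * ε)) := by
      rw [one_div, one_div, Real.sqrt_inv]
      congr 1
      rw [show (4 : ℝ) * ε = (2 * Real.sqrt ε) ^ 2 by
        rw [mul_pow, Real.sq_sqrt hε.le]; ring]
      exact (Real.sqrt_sq (by positivity)).symm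
    rw [hsqrt]
    calc ‖S‖ = Real.sqrt (‖S‖ * ‖S‖) := (Real.sqrt_mul_self (norm_nonneg S)).symm
      _ ≤ Real.sqrt (1 / (4 * ε)) := Real.sqrt_le_sqrt hSS
  -- first term
  have hterm1 : ‖R (adjoint Tn (Tn xdag - ytil))‖ ≤ φ ε / 2 := by
    have h6 : R (adjoint Tn (Tn xdag - ytil)) = (adjoint S) (Tn xdag - ytil) := by
      rw [hadjS]; rfl
    rw [h6]
    calc ‖(adjoint S) (Tn xdag - ytil)‖ ≤ ‖adjoint S‖ * ‖Tn xdag - ytil‖ :=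
          le_opNorm _ _
      _ ≤ (1 / (2 * Real.sqrt ε)) * (Real.sqrt ε * φ ε) := by
          apply mul_le_mul _ hytil (norm_nonneg _) (by positivity)
          rw [show ‖adjoint S‖ = ‖S‖ from adjoint.norm_map S]
          exact hnormS
      _ = φ ε / 2 := by
          have h7 : Real.sqrt ε ≠ 0 := by positivity
          field_simp
  -- bound M on ‖RA * P‖
  set M : ℝ := c₀ * φ ε / ε with hMdef
  have hM0 : 0 ≤ M := by positivity
  have hRAP : ‖RA * P‖ ≤ M := by
    rw [show RA * P = cfc (fun l : ℝ => (l + ε)⁻¹ * φ l) A from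
      (cfc_mul (fun l : ℝ => (l + ε)⁻¹) φ A hgA hφA).symm]
    apply norm_cfc_le hM0
    intro x hx
    have hx0 : 0 ≤ x := hspecA x hx
    have hxε : 0 < x + ε := by positivity
    have hφx : 0 ≤ φ x := by
      rcases eq_or_lt_of_le hx0 with h | h
      · rw [← h, hφ0]
      · exact (hφpos x h).le
    rw [Real.norm_of_nonneg (by positivity)]
    rcases eq_or_lt_of_le hx0 with h | h
    · rw [← h, hφ0, mul_zero, hMdef]
      positivity
    · rw [hMdef, le_div_iff₀ hε]
      calc (x + ε)⁻¹ * φ x * ε = ε * φ x / (x + ε) := by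
            field_simp
        _ ≤ c₀ * φ ε := hsrc ε hε x h
  have hRnorm : ‖R‖ ≤ ε⁻¹ := by
    rw [hRdef]
    apply norm_cfc_le (by positivity)
    intro x hx
    have hx0 : 0 ≤ x := hspecB x hx
    rw [Real.norm_of_nonneg (by positivity)]
    exact inv_anti₀ hε (by linarith)
  -- resolvent identity
  have key2 : R * P = RA * P + (R * (A - B)) * (RA * P) := by
    have hAB : A - B = (A + ε • 1) - (B + ε • 1) := by abel
    have e1 : (R * (A + ε • 1)) * (RA * P) = R * P := by
      rw [mul_assoc R (A + ε • 1) (RA * P), ← mul_assoc (A + ε • 1) RA P, hAAR, one_mul]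
    have e2 : (R * (B + ε • 1)) * (RA * P) = RA * P := by
      rw [hRB, one_mul]
    calc R * P = RA * P + ((R * (A + ε • 1)) * (RA * P) - (R * (B + ε • 1)) * (RA * P)) := by
          rw [e1, e2]; abel
      _ = RA * P + (R * (A - B)) * (RA * P) := by
          rw [hAB, mul_sub, sub_mul]
  -- second term
  have hterm2 : ‖ε • (R xdag)‖ ≤ 2 * c₀ * ‖u‖ * φ ε := by
    have h8 : R xdag = (R * P) u := by rw [hu, ContinuousLinearMap.mul_apply]
    rw [norm_smul, Real.norm_of_nonneg hε.le, h8, key2]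
    have h9 : ‖(RA * P + (R * (A - B)) * (RA * P)) u‖ ≤ M * ‖u‖ + M * ‖u‖ := by
      rw [add_apply]
      refine (norm_add_le _ _).trans (add_le_add ?_ ?_)
      · exact (le_opNorm _ u).trans (mul_le_mul_of_nonneg_right hRAP (norm_nonneg u))
      · refine (le_opNorm _ u).trans (mul_le_mul_of_nonneg_right ?_ (norm_nonneg u))
        calc ‖(R * (A - B)) * (RA * P)‖ ≤ ‖R * (A - B)‖ * ‖RA * P‖ := norm_mul_le _ _
          _ ≤ (‖R‖ * ‖A - B‖) * M :=
              mul_le_mul (norm_mul_le _ _) hRAP (norm_nonneg _)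
                (mul_nonneg (norm_nonneg _) (norm_nonneg _))
          _ ≤ (ε⁻¹ * ε) * M := by
              apply mul_le_mul_of_nonneg_right _ hM0
              exact mul_le_mul hRnorm hnorm (norm_nonneg _) (by positivity)
          _ = M := by rw [inv_mul_cancel₀ hε.ne', one_mul]
    calc ε * ‖(RA * P + (R * (A - B)) * (RA * P)) u‖ ≤ ε * (M * ‖u‖ + M * ‖u‖) :=
          mul_le_mul_of_nonneg_left h9 hε.le
      _ = 2 * c₀ * ‖u‖ * φ ε := by
          rw [hMdef]; field_simp; ring
  calc ‖xdag - xtil‖ ≤ ‖R (adjoint Tn (Tn xdag - ytil))‖ + ‖ε • (R xdag)‖ := by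
        rw [key]; exact norm_add_le _ _
    _ ≤ φ ε / 2 + 2 * c₀ * ‖u‖ * φ ε := add_le_add hterm1 hterm2
    _ ≤ (2 * c₀ * ‖u‖ + 1) * φ ε := by nlinarith [hφε]
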